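/- Let 0 < β ≤ 1 and d ≥ 1. When the star lossless coupling scheme is used, a set S = {s_1,…,s_p} ⊆ U influences at least a β fraction of users in G^{1..k} after d propagation hops (i.e., |A^d(G^{1..k},S)| ≥ β·|U|) if and only if S' = {s_1^0,…,s_p^0} influences at least a β fraction of vertices in the coupled network G after 3d propagation hops (i.e., |A^{3d}(G,S')| ≥ β·|V| where |V| = (k+2)·|U|). -/

import Mathlib

open scoped Classical

/-- LT active sets on a single directed weighted network `G = (V, w, θ)`. -/
noncomputable def ltIter {V : Type*} [Fintype V] [DecidableEq V]
    (w : V → V → ℝ) (θ : V → ℝ) (S : Finset V) : ℕ → Finset V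
  | 0 => S
  | t + 1 =>
      ltIter w θ S t ∪
        Finset.univ.filter (fun x => θ x ≤ ∑ y ∈ ltIter w θ S t, w y x)

/-- LT active sets on the multiplex system `G^{1..k}`. -/
noncomputable def multiIter {U : Type*} [Fintype U] [DecidableEq U] {k : ℕ}
    (w : Fin k → U → U → ℝ) (θ : Fin k → U → ℝ) (S : Finset U) : ℕ → Finset U
  | 0 => S
  | t + 1 =>
      multiIter w θ S t ∪
        Finset.univ.filter
          (fun u => ∃ i : Fin k, θ i u ≤ ∑ v ∈ multiIter w θ S t, w i v u)

/-- Vertex indices of the star lossless coupled network: `gateway` is the gateway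
vertex `u⁰`, `rep i` is the representative vertex `uⁱ` (`1 ≤ i ≤ k`), and `mid` is
the intermediate synchronization vertex `u^{k+1}`. -/
inductive StarIdx (k : ℕ) where
  | gateway : StarIdx k
  | rep : Fin k → StarIdx k
  | mid : StarIdx k
  deriving DecidableEq, Fintype

/-- Thresholds of the star lossless coupled network: `θ(u⁰) = θ(u^{k+1}) = 1`;
`θ(uⁱ) = θ^i(u)` if `u ∈ V^i` and 1 otherwise. -/
noncomputable def starTheta {U : Type*} [DecidableEq U] {k : ℕ}
    (Vmem : Fin k → Finset U) (θ : Fin k → U → ℝ) : U × StarIdx k → ℝ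
  | (_, .gateway) => 1
  | (_, .mid) => 1
  | (u, .rep i) => if u ∈ Vmem i then θ i u else 1

/-- Edge weights of the star lossless coupled network:
`w(u⁰, vⁱ) = w^i(u, v)` for users `u ≠ v` and `1 ≤ i ≤ k`;
`w(uⁱ, u^{k+1}) = 1` and `w(u^{k+1}, uⁱ) = θ(uⁱ)` for `1 ≤ i ≤ k`;
`w(u^{k+1}, u⁰) = w(u⁰, u^{k+1}) = 1`; all other weights are 0. -/
noncomputable def starW {U : Type*} [DecidableEq U] {k : ℕ}
    (Vmem : Fin k → Finset U) (w : Fin k → U → U → ℝ) (θ : Fin k → U → ℝ) :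
    U × StarIdx k → U × StarIdx k → ℝ :=
  fun x y =>
    if x.1 = y.1 then
      match x.2, y.2 with
      | .rep _, .mid => 1
      | .mid, .rep _ => starTheta Vmem θ y
      | .mid, .gateway => 1
      | .gateway, .mid => 1
      | _, _ => 0
    else
      match x.2, y.2 with
      | .gateway, .rep i => w i x.1 y.1
      | _, _ => 0

set_option linter.unusedSectionVars false


section StarAux

variable {U : Type*} [Fintype U] [DecidableEq U] {k : ℕ}
variable (Vmem : Fin k → Finset U) (w : Fin k → U → U → ℝ) (θ : Fin k → U → ℝ)

/-- one step of the LT process -/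
noncomputable def ltStep {V : Type*} [Fintype V] [DecidableEq V]
    (w : V → V → ℝ) (θ : V → ℝ) (X : Finset V) : Finset V :=
  X ∪ Finset.univ.filter (fun x => θ x ≤ ∑ y ∈ X, w y x)

lemma ltIter_succ {V : Type*} [Fintype V] [DecidableEq V]
    (w : V → V → ℝ) (θ : V → ℝ) (S : Finset V) (t : ℕ) :
    ltIter w θ S (t + 1) = ltStep w θ (ltIter w θ S t) := rfl

lemma subset_ltStep {V : Type*} [Fintype V] [DecidableEq V]
    (w : V → V → ℝ) (θ : V → ℝ) (X : Finset V) : X ⊆ ltStep w θ X :=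
  Finset.subset_union_left

lemma mem_ltStep_of_le {V : Type*} [Fintype V] [DecidableEq V]
    {w : V → V → ℝ} {θ : V → ℝ} {X : Finset V} {x : V}
    (h : θ x ≤ ∑ y ∈ X, w y x) : x ∈ ltStep w θ X := by
  simp [ltStep, h]

/-- the "newly activatable" users of the multiplex system from active set `g` -/
noncomputable def mcond (g : Finset U) : Finset U :=
  Finset.univ.filter (fun u => ∃ i : Fin k, θ i u ≤ ∑ v ∈ g, w i v u)

lemma multiIter_succ (S : Finset U) (t : ℕ) :
    multiIter w θ S (t + 1) = multiIter w θ S t ∪ mcond w θ (multiIter w θ S t) := rfl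

/-- per-layer picture set: gateways from `g`, reps from `r`, mids from `m` -/
noncomputable def starT (g r m : Finset U) : Finset (U × StarIdx k) :=
  Finset.univ.filter fun x =>
    match x.2 with
    | .gateway => x.1 ∈ g
    | .rep _ => x.1 ∈ r
    | .mid => x.1 ∈ m

@[simp] lemma mem_starT_gateway {g r m : Finset U} {u : U} :
    (u, StarIdx.gateway) ∈ (starT g r m : Finset (U × StarIdx k)) ↔ u ∈ g := by
  simp [starT]

@[simp] lemma mem_starT_rep {g r m : Finset U} {u : U} {i : Fin k} :
    (u, StarIdx.rep i) ∈ (starT g r m : Finset (U × StarIdx k)) ↔ u ∈ r := by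
  simp [starT]

@[simp] lemma mem_starT_mid {g r m : Finset U} {u : U} :
    (u, StarIdx.mid) ∈ (starT g r m : Finset (U × StarIdx k)) ↔ u ∈ m := by
  simp [starT]

lemma starT_mono {g g' r r' m m' : Finset U} (hg : g ⊆ g') (hr : r ⊆ r') (hm : m ⊆ m') :
    (starT g r m : Finset (U × StarIdx k)) ⊆ starT g' r' m' := by
  rintro ⟨u, j⟩ hx
  cases j with
  | gateway => simp only [mem_starT_gateway] at hx ⊢; exact hg hx
  | rep i => simp only [mem_starT_rep] at hx ⊢; exact hr hx
  | mid => simp only [mem_starT_mid] at hx ⊢; exact hm hx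

lemma starTheta_pos (hθpos : ∀ i u, 0 < θ i u) (x : U × StarIdx k) :
    0 < starTheta Vmem θ x := by
  obtain ⟨u, j⟩ := x
  cases j with
  | gateway => norm_num [starTheta]
  | mid => norm_num [starTheta]
  | rep i =>
      simp only [starTheta]
      split
      · exact hθpos i u
      · norm_num

lemma starW_to_gateway (x : U × StarIdx k) (u : U) :
    starW Vmem w θ x (u, StarIdx.gateway) = if x = (u, StarIdx.mid) then 1 else 0 := by
  obtain ⟨a, j⟩ := x
  by_cases h : a = u <;> cases j <;> simp [starW, h, Prod.ext_iff]

lemma starW_to_mid (x : U × StarIdx k) (u : U) :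
    starW Vmem w θ x (u, StarIdx.mid) =
      if x.1 = u ∧ x.2 ≠ StarIdx.mid then 1 else 0 := by
  obtain ⟨a, j⟩ := x
  by_cases h : a = u <;> cases j <;> simp [starW, h]

lemma starW_to_rep (x : U × StarIdx k) (v : U) (i : Fin k) :
    starW Vmem w θ x (v, StarIdx.rep i) =
      if x = (v, StarIdx.mid) then starTheta Vmem θ (v, StarIdx.rep i)
      else if x.2 = StarIdx.gateway ∧ x.1 ≠ v then w i x.1 v else 0 := by
  obtain ⟨a, j⟩ := x
  by_cases h : a = v <;> cases j <;> simp [starW, h, Prod.ext_iff]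

lemma starW_nonneg (hw0 : ∀ i v u, 0 ≤ w i v u) (hθpos : ∀ i u, 0 < θ i u)
    (x y : U × StarIdx k) : 0 ≤ starW Vmem w θ x y := by
  obtain ⟨b, jb⟩ := y
  cases jb with
  | gateway => rw [starW_to_gateway]; split <;> norm_num
  | mid => rw [starW_to_mid]; split <;> norm_num
  | rep i =>
      rw [starW_to_rep]
      split
      · exact (starTheta_pos Vmem θ hθpos _).le
      · split
        · exact hw0 _ _ _
        · exact le_refl _

lemma sum_to_gateway (X : Finset (U × StarIdx k)) (u : U) :
    ∑ y ∈ X, starW Vmem w θ y (u, StarIdx.gateway) =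
      if (u, StarIdx.mid) ∈ X then 1 else 0 := by
  simp only [starW_to_gateway]
  rw [Finset.sum_ite_eq' X (u, StarIdx.mid) (fun _ => (1 : ℝ))]

/-- upper bound on the incoming weight to a representative vertex when the active
gateways are contained in `g` and the own mid vertex is inactive -/
lemma sum_to_rep_le (hw0 : ∀ i v u, 0 ≤ w i v u)
    (X : Finset (U × StarIdx k)) (g : Finset U) (v : U) (i : Fin k)
    (hgw : ∀ a, (a, StarIdx.gateway) ∈ X → a ∈ g)
    (hmid : (v, StarIdx.mid) ∉ X) :
    ∑ y ∈ X, starW Vmem w θ y (v, StarIdx.rep i) ≤ ∑ u ∈ g, w i u v := by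
  have h1 : ∑ y ∈ X, starW Vmem w θ y (v, StarIdx.rep i)
      = ∑ y ∈ X.filter (fun y => y.2 = StarIdx.gateway ∧ y.1 ≠ v), w i y.1 v := by
    rw [Finset.sum_filter]
    refine Finset.sum_congr rfl ?_
    intro y hy
    rw [starW_to_rep]
    rw [if_neg (by rintro rfl; exact hmid hy)]
  rw [h1]
  have hsub : X.filter (fun y => y.2 = StarIdx.gateway ∧ y.1 ≠ v)
      ⊆ g.image (fun u => (u, StarIdx.gateway)) := by
    rintro ⟨a, j⟩ hy
    simp only [Finset.mem_filter] at hy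
    obtain ⟨hyX, hj, -⟩ := hy
    subst hj
    exact Finset.mem_image.mpr ⟨a, hgw a hyX, rfl⟩
  calc ∑ y ∈ X.filter (fun y => y.2 = StarIdx.gateway ∧ y.1 ≠ v), w i y.1 v
      ≤ ∑ y ∈ g.image (fun u => (u, StarIdx.gateway)), w i y.1 v := by
        refine Finset.sum_le_sum_of_subset_of_nonneg hsub ?_
        intro y _ _
        exact hw0 _ _ _
    _ = ∑ u ∈ g, w i u v := by
        rw [Finset.sum_image]
        intro a _ b _ h
        exact (Prod.mk.injEq _ _ _ _ ▸ h).1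

/-- lower bound: all gateways of `A` are active and `v ∉ A` -/
lemma sum_to_rep_ge (hw0 : ∀ i v u, 0 ≤ w i v u) (hθpos : ∀ i u, 0 < θ i u)
    (X : Finset (U × StarIdx k)) (A : Finset U) (v : U) (i : Fin k)
    (hA : ∀ a ∈ A, (a, StarIdx.gateway) ∈ X) (hv : v ∉ A) :
    ∑ u ∈ A, w i u v ≤ ∑ y ∈ X, starW Vmem w θ y (v, StarIdx.rep i) := by
  have h1 : ∑ u ∈ A, w i u v
      = ∑ y ∈ A.image (fun u => (u, StarIdx.gateway)),
          starW Vmem w θ y (v, StarIdx.rep i) := by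
    rw [Finset.sum_image (by intro a _ b _ h; exact (Prod.mk.injEq _ _ _ _ ▸ h).1)]
    refine Finset.sum_congr rfl ?_
    intro a ha
    rw [starW_to_rep]
    rw [if_neg (by simp), if_pos ⟨rfl, by rintro rfl; exact hv ha⟩]
  rw [h1]
  refine Finset.sum_le_sum_of_subset_of_nonneg ?_ ?_
  · intro y hy
    obtain ⟨a, ha, rfl⟩ := Finset.mem_image.mp hy
    exact hA a ha
  · intro y _ _
    exact starW_nonneg Vmem w θ hw0 hθpos _ _

/-- single-edge activation bound -/
lemma theta_le_sum_of_single (hw0 : ∀ i v u, 0 ≤ w i v u) (hθpos : ∀ i u, 0 < θ i u)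
    {X : Finset (U × StarIdx k)} {y₀ x : U × StarIdx k} (hy₀ : y₀ ∈ X)
    (h : starTheta Vmem θ x ≤ starW Vmem w θ y₀ x) :
    starTheta Vmem θ x ≤ ∑ y ∈ X, starW Vmem w θ y x :=
  h.trans (Finset.single_le_sum (fun y _ => starW_nonneg Vmem w θ hw0 hθpos y x) hy₀)

/-- Upper simulation: one LT step on the coupled network. -/
lemma upper_step (hw0 : ∀ i v u, 0 ≤ w i v u)
    (hwV : ∀ i v u, v ∉ Vmem i ∨ u ∉ Vmem i → w i v u = 0)
    (hθpos : ∀ i u, 0 < θ i u)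
    (g r m : Finset U) (X : Finset (U × StarIdx k))
    (hX : X ⊆ starT g r m) :
    ltStep (starW Vmem w θ) (starTheta Vmem θ) X ⊆
      starT (g ∪ m) (r ∪ m ∪ mcond w θ g) (g ∪ r ∪ m) := by
  intro x hx
  rcases Finset.mem_union.mp hx with h | h
  · refine starT_mono ?_ ?_ ?_ (hX h) <;> intro a ha <;> simp [ha]
  · obtain ⟨-, hle⟩ := Finset.mem_filter.mp h
    obtain ⟨u, j⟩ := x
    cases j with
    | gateway =>
        rw [sum_to_gateway] at hle
        have h1 : starTheta Vmem θ (u, StarIdx.gateway) = 1 := rfl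
        rw [h1] at hle
        by_cases hmem : (u, StarIdx.mid) ∈ X
        · have := hX hmem
          rw [mem_starT_mid] at this
          simp [this]
        · rw [if_neg hmem] at hle; norm_num at hle
    | mid =>
        have hex : ∃ y ∈ X, y.1 = u ∧ y.2 ≠ StarIdx.mid := by
          by_contra hcon
          push_neg at hcon
          have hz : ∑ y ∈ X, starW Vmem w θ y (u, StarIdx.mid) = 0 := by
            refine Finset.sum_eq_zero ?_
            intro y hy
            rw [starW_to_mid, if_neg]
            rintro ⟨h1, h2⟩
            exact h2 (hcon y hy h1)
          have h1 : starTheta Vmem θ (u, StarIdx.mid) = 1 := rfl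
          rw [h1, hz] at hle
          norm_num at hle
        obtain ⟨y, hyX, hy1, hy2⟩ := hex
        have hmem := hX hyX
        obtain ⟨a, jy⟩ := y
        dsimp at hy1 hy2
        subst hy1
        cases jy with
        | gateway =>
            rw [mem_starT_gateway] at hmem
            simp [hmem]
        | rep i =>
            rw [mem_starT_rep] at hmem
            simp [hmem]
        | mid => exact absurd rfl hy2
    | rep i =>
        by_cases hmid : (u, StarIdx.mid) ∈ X
        · have := hX hmid
          rw [mem_starT_mid] at this
          simp [this]
        · have hgw : ∀ a, (a, StarIdx.gateway) ∈ X → a ∈ g := by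
            intro a ha
            have := hX ha
            rwa [mem_starT_gateway] at this
          have hsum := sum_to_rep_le Vmem w θ hw0 X g u i hgw hmid
          have h2 : starTheta Vmem θ (u, StarIdx.rep i) ≤ ∑ a ∈ g, w i a u :=
            hle.trans hsum
          by_cases hV : u ∈ Vmem i
          · have h3 : θ i u ≤ ∑ a ∈ g, w i a u := by
              have : starTheta Vmem θ (u, StarIdx.rep i) = θ i u := by
                simp [starTheta, hV]
              rwa [this] at h2
            have : u ∈ mcond w θ g := by
              simp only [mcond, Finset.mem_filter, Finset.mem_univ, true_and]
              exact ⟨i, h3⟩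
            simp [this]
          · exfalso
            have hz : ∑ a ∈ g, w i a u = 0 :=
              Finset.sum_eq_zero (fun a _ => hwV i a u (Or.inr hV))
            have : starTheta Vmem θ (u, StarIdx.rep i) = 1 := by
              simp [starTheta, hV]
            rw [this, hz] at h2
            norm_num at h2

/-- Upper simulation over all times. -/
lemma upper_all (hw0 : ∀ i v u, 0 ≤ w i v u)
    (hwV : ∀ i v u, v ∉ Vmem i ∨ u ∉ Vmem i → w i v u = 0)
    (hθpos : ∀ i u, 0 < θ i u) (S : Finset U) :
    ∀ t, ltIter (starW Vmem w θ) (starTheta Vmem θ)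
        (S.image (fun s => (s, (StarIdx.gateway : StarIdx k)))) (3 * t) ⊆
      starT (multiIter w θ S t) (multiIter w θ S t) (multiIter w θ S t) := by
  intro t
  induction t with
  | zero =>
      intro x hx
      simp only [Nat.mul_zero] at hx
      obtain ⟨s, hs, rfl⟩ := Finset.mem_image.mp hx
      have : s ∈ multiIter w θ S 0 := hs
      simpa using this
  | succ t ih =>
      set A := multiIter w θ S t with hA
      set B := multiIter w θ S (t + 1) with hB
      have hAB : A ⊆ B := Finset.subset_union_left
      have hcond : mcond w θ A ⊆ B := by
        rw [hB, multiIter_succ]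
        exact Finset.subset_union_right
      have h3 : 3 * (t + 1) = 3 * t + 1 + 1 + 1 := by ring
      rw [h3]
      have s1 := upper_step Vmem w θ hw0 hwV hθpos A A A _ ih
      have s1' : ltIter (starW Vmem w θ) (starTheta Vmem θ)
          (S.image (fun s => (s, (StarIdx.gateway : StarIdx k)))) (3 * t + 1) ⊆
          starT A B A := by
        rw [ltIter_succ]
        refine s1.trans (starT_mono ?_ ?_ ?_)
        · simp
        · intro a ha
          rcases Finset.mem_union.mp ha with h | h
          · rcases Finset.mem_union.mp h with h | h
            · exact hAB h
            · exact hAB h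
          · exact hcond h
        · simp
      have s2 := upper_step Vmem w θ hw0 hwV hθpos A B A _ s1'
      have s2' : ltIter (starW Vmem w θ) (starTheta Vmem θ)
          (S.image (fun s => (s, (StarIdx.gateway : StarIdx k)))) (3 * t + 1 + 1) ⊆
          starT A B B := by
        rw [ltIter_succ]
        refine s2.trans (starT_mono ?_ ?_ ?_)
        · simp
        · intro a ha
          rcases Finset.mem_union.mp ha with h | h
          · rcases Finset.mem_union.mp h with h | h
            · exact h
            · exact hAB h
          · exact hcond h
        · intro a ha
          rcases Finset.mem_union.mp ha with h | h
          · rcases Finset.mem_union.mp h with h | h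
            · exact hAB h
            · exact h
          · exact hAB h
      have s3 := upper_step Vmem w θ hw0 hwV hθpos A B B _ s2'
      rw [ltIter_succ]
      refine s3.trans (starT_mono ?_ ?_ ?_)
      · intro a ha
        rcases Finset.mem_union.mp ha with h | h
        · exact hAB h
        · exact h
      · intro a ha
        rcases Finset.mem_union.mp ha with h | h
        · rcases Finset.mem_union.mp h with h | h
          · exact h
          · exact h
        · exact hcond h
      · intro a ha
        rcases Finset.mem_union.mp ha with h | h
        · rcases Finset.mem_union.mp h with h | h
          · exact hAB h
          · exact h
        · exact h

/-- Lower simulation: three coupled-network steps catch up with one multiplex step. -/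
lemma lower_step (hw0 : ∀ i v u, 0 ≤ w i v u)
    (hwV : ∀ i v u, v ∉ Vmem i ∨ u ∉ Vmem i → w i v u = 0)
    (hθpos : ∀ i u, 0 < θ i u)
    (A : Finset U) (X : Finset (U × StarIdx k))
    (hX : ∀ u ∈ A, (u, StarIdx.gateway) ∈ X) :
    starT (A ∪ mcond w θ A) (A ∪ mcond w θ A) (A ∪ mcond w θ A) ⊆
      ltStep (starW Vmem w θ) (starTheta Vmem θ)
        (ltStep (starW Vmem w θ) (starTheta Vmem θ)
          (ltStep (starW Vmem w θ) (starTheta Vmem θ) X)) := by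
  set W := starW Vmem w θ
  set Θ := starTheta Vmem θ
  set X1 := ltStep W Θ X with hX1
  set X2 := ltStep W Θ X1 with hX2
  -- gateways of A stay active
  have hgw1 : ∀ u ∈ A, (u, StarIdx.gateway) ∈ X1 := fun u hu =>
    subset_ltStep _ _ _ (hX u hu)
  -- mids of A active after one step
  have hmid1 : ∀ u ∈ A, (u, StarIdx.mid) ∈ X1 := by
    intro u hu
    refine mem_ltStep_of_le (theta_le_sum_of_single Vmem w θ hw0 hθpos (hX u hu) ?_)
    rw [starW_to_mid]
    simp [starTheta]
  -- newly conditioned users get one rep after one step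
  have hrep1 : ∀ v ∈ mcond w θ A, v ∉ A → ∃ i : Fin k, (v, StarIdx.rep i) ∈ X1 := by
    intro v hv hvA
    simp only [mcond, Finset.mem_filter, Finset.mem_univ, true_and] at hv
    obtain ⟨i, hi⟩ := hv
    have hVm : v ∈ Vmem i := by
      by_contra hc
      have hz : ∑ u ∈ A, w i u v = 0 :=
        Finset.sum_eq_zero (fun a _ => hwV i a v (Or.inr hc))
      rw [hz] at hi
      exact absurd hi (not_le.mpr (hθpos i v))
    refine ⟨i, mem_ltStep_of_le ?_⟩
    have hΘ : Θ (v, StarIdx.rep i) = θ i v := by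
      simp [Θ, starTheta, hVm]
    rw [hΘ]
    exact hi.trans (sum_to_rep_ge Vmem w θ hw0 hθpos X A v i hX hvA)
  -- all mids of A ∪ mcond A active after two steps
  have hmid2 : ∀ v ∈ A ∪ mcond w θ A, (v, StarIdx.mid) ∈ X2 := by
    intro v hv
    by_cases hvA : v ∈ A
    · exact subset_ltStep _ _ _ (hmid1 v hvA)
    · have hv' : v ∈ mcond w θ A := by
        rcases Finset.mem_union.mp hv with h | h
        · exact absurd h hvA
        · exact h
      obtain ⟨i, hrep⟩ := hrep1 v hv' hvA
      refine mem_ltStep_of_le (theta_le_sum_of_single Vmem w θ hw0 hθpos hrep ?_)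
      rw [starW_to_mid]
      simp [Θ, starTheta]
  -- final step
  rintro ⟨u, j⟩ hx
  cases j with
  | gateway =>
      rw [mem_starT_gateway] at hx
      refine mem_ltStep_of_le (theta_le_sum_of_single Vmem w θ hw0 hθpos (hmid2 u hx) ?_)
      rw [starW_to_gateway]
      simp [Θ, starTheta]
  | mid =>
      rw [mem_starT_mid] at hx
      exact subset_ltStep _ _ _ (hmid2 u hx)
  | rep i =>
      rw [mem_starT_rep] at hx
      refine mem_ltStep_of_le (theta_le_sum_of_single Vmem w θ hw0 hθpos (hmid2 u hx) ?_)
      rw [starW_to_rep]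
      simp

/-- Lower simulation over all times. -/
lemma lower_all (hw0 : ∀ i v u, 0 ≤ w i v u)
    (hwV : ∀ i v u, v ∉ Vmem i ∨ u ∉ Vmem i → w i v u = 0)
    (hθpos : ∀ i u, 0 < θ i u) (S : Finset U) :
    ∀ t, starT (multiIter w θ S (t + 1)) (multiIter w θ S (t + 1)) (multiIter w θ S (t + 1)) ⊆
      ltIter (starW Vmem w θ) (starTheta Vmem θ)
        (S.image (fun s => (s, (StarIdx.gateway : StarIdx k)))) (3 * (t + 1)) := by
  have key : ∀ t, ∀ u ∈ multiIter w θ S t,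
      (u, StarIdx.gateway) ∈ ltIter (starW Vmem w θ) (starTheta Vmem θ)
        (S.image (fun s => (s, (StarIdx.gateway : StarIdx k)))) (3 * t) := by
    intro t
    induction t with
    | zero =>
        intro u hu
        simp only [Nat.mul_zero]
        exact Finset.mem_image.mpr ⟨u, hu, rfl⟩
    | succ t ih =>
        intro u hu
        have h3 : 3 * (t + 1) = 3 * t + 1 + 1 + 1 := by ring
        rw [h3, ltIter_succ, ltIter_succ, ltIter_succ]
        have := lower_step Vmem w θ hw0 hwV hθpos (multiIter w θ S t) _ ih
        refine this ?_
        rw [mem_starT_gateway]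
        rw [multiIter_succ] at hu
        exact hu
  intro t
  have h3 : 3 * (t + 1) = 3 * t + 1 + 1 + 1 := by ring
  rw [h3, ltIter_succ, ltIter_succ, ltIter_succ]
  have hstep := lower_step Vmem w θ hw0 hwV hθpos (multiIter w θ S t) _ (key t)
  refine Finset.Subset.trans ?_ hstep
  rw [← multiIter_succ]

/-- the coupled network at time `3d` is exactly the `k+2` copies of the multiplex
active set at time `d`, for `d ≥ 1`. -/
lemma star_eq (hw0 : ∀ i v u, 0 ≤ w i v u)
    (hwV : ∀ i v u, v ∉ Vmem i ∨ u ∉ Vmem i → w i v u = 0)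
    (hθpos : ∀ i u, 0 < θ i u) (S : Finset U) (t : ℕ) :
    ltIter (starW Vmem w θ) (starTheta Vmem θ)
        (S.image (fun s => (s, (StarIdx.gateway : StarIdx k)))) (3 * (t + 1)) =
      starT (multiIter w θ S (t + 1)) (multiIter w θ S (t + 1)) (multiIter w θ S (t + 1)) :=
  Finset.Subset.antisymm (upper_all Vmem w θ hw0 hwV hθpos S (t + 1))
    (lower_all Vmem w θ hw0 hwV hθpos S t)

def starIdxEquiv : StarIdx k ≃ (Fin k ⊕ Bool) where
  toFun x := match x with
    | .gateway => .inr false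
    | .mid => .inr true
    | .rep i => .inl i
  invFun x := match x with
    | .inr false => .gateway
    | .inr true => .mid
    | .inl i => .rep i
  left_inv := by intro x; cases x <;> rfl
  right_inv := by rintro (i | (_ | _)) <;> rfl

lemma card_starIdx : Fintype.card (StarIdx k) = k + 2 := by
  rw [Fintype.card_congr (starIdxEquiv (k := k))]
  simp

lemma starT_card (A : Finset U) :
    ((starT A A A : Finset (U × StarIdx k))).card = (k + 2) * A.card := by
  have h : (starT A A A : Finset (U × StarIdx k)) = A ×ˢ (Finset.univ : Finset (StarIdx k)) := by
    ext ⟨u, j⟩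
    cases j <;> simp [Finset.mem_product]
  rw [h, Finset.card_product, Finset.card_univ, card_starIdx, Nat.mul_comm]

end StarAux

/-- **Theorem 3.** With the star lossless coupling scheme, a seed set
`S ⊆ U` influences at least a `β` fraction of the users of `G^{1..k}` after `d` hops
iff `S' = { s⁰ : s ∈ S }` influences at least a `β` fraction of the vertices of the
coupled network `G` (of which there are `|V| = (k+2)·|U|`) after `3d` hops. -/
theorem star_beta_fraction_iff
    {U : Type*} [Fintype U] [DecidableEq U] {k : ℕ} (hk : 1 ≤ k)
    (Vmem : Fin k → Finset U) (w : Fin k → U → U → ℝ) (θ : Fin k → U → ℝ)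
    (hw0 : ∀ i v u, 0 ≤ w i v u)
    (hwV : ∀ i v u, v ∉ Vmem i ∨ u ∉ Vmem i → w i v u = 0)
    (hθpos : ∀ i u, 0 < θ i u)
    (β : ℝ) (hβ0 : 0 < β) (hβ1 : β ≤ 1)
    (S : Finset U) (d : ℕ) (hd : 1 ≤ d) :
    β * (Fintype.card U : ℝ) ≤ ((multiIter w θ S d).card : ℝ) ↔
      β * (((k + 2) * Fintype.card U : ℕ) : ℝ) ≤
        ((ltIter (starW Vmem w θ) (starTheta Vmem θ)
            (S.image (fun s => (s, (StarIdx.gateway : StarIdx k)))) (3 * d)).card : ℝ) := by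
  obtain ⟨t, rfl⟩ : ∃ t, d = t + 1 := ⟨d - 1, by omega⟩
  rw [star_eq Vmem w θ hw0 hwV hθpos S t, starT_card]
  set A := multiIter w θ S (t + 1)
  have hpos : (0 : ℝ) < (k : ℝ) + 2 := by positivity
  rw [show β * (((k + 2) * Fintype.card U : ℕ) : ℝ)
        = ((k : ℝ) + 2) * (β * (Fintype.card U : ℝ)) by push_cast; ring,
      show (((k + 2) * A.card : ℕ) : ℝ) = ((k : ℝ) + 2) * (A.card : ℝ) by push_cast; ring,
      mul_le_mul_iff_of_pos_left hpos]
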